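/- Let σ > 0, R > 0, and let n ≥ 1 be a natural number. For ȳ ∈ ℝ set a(ȳ) = −√n(R+ȳ)/σ and b(ȳ) = √n(R−ȳ)/σ, and set c = √n·R/σ. Then ∫_ℝ (1/(2R)) · (σ²/n) · [ (Φ(b(ȳ)) − Φ(a(ȳ))) − (b(ȳ)φ(b(ȳ)) − a(ȳ)φ(a(ȳ))) − (φ(b(ȳ)) − φ(a(ȳ)))²/(Φ(b(ȳ)) − Φ(a(ȳ))) ] dȳ = (σ²/n) · [ 1 − (σ/(2√n·R)) ∫_ℝ (φ(x+c) − φ(x−c))²/(Φ(x+c) − Φ(x−c)) dx ]. (The left-hand side is the expected variance of a truncated normal posterior with location ȳ, scale σ²/n and domain [−R,R], where ȳ has density (1/(2R))(Φ(b(ȳ)) − Φ(a(ȳ))).) -/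

import Mathlib

open MeasureTheory Real

/-- The standard normal density. -/
noncomputable def gaussPdf (x : ℝ) : ℝ :=
  (Real.sqrt (2 * Real.pi))⁻¹ * Real.exp (-(x ^ 2) / 2)

/-- The standard normal CDF. -/
noncomputable def gaussCdf (x : ℝ) : ℝ :=
  ∫ t in Set.Iic x, gaussPdf t

lemma gaussPdf_eq : gaussPdf = fun x => (Real.sqrt (2 * Real.pi))⁻¹ * Real.exp (-(1/2) * x ^ 2) := by
  funext x; unfold gaussPdf; ring_nf

lemma gaussPdf_pos (x : ℝ) : 0 < gaussPdf x := by
  unfold gaussPdf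
  positivity

lemma continuous_gaussPdf : Continuous gaussPdf := by
  unfold gaussPdf
  continuity

lemma integrable_gaussPdf : Integrable gaussPdf := by
  rw [gaussPdf_eq]
  exact (integrable_exp_neg_mul_sq (by norm_num)).const_mul _

lemma integral_gaussPdf : ∫ x, gaussPdf x = 1 := by
  rw [gaussPdf_eq]
  rw [integral_const_mul, integral_gaussian]
  rw [show Real.pi / (1/2) = 2 * Real.pi by ring]
  rw [inv_mul_cancel₀ (by positivity : Real.sqrt (2 * Real.pi) ≠ 0)]

lemma integrable_mul_gaussPdf : Integrable (fun x => x * gaussPdf x) := by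
  have := (integrable_mul_exp_neg_mul_sq (b := 1/2) (by norm_num)).const_mul
    ((Real.sqrt (2 * Real.pi))⁻¹)
  refine (this.congr ?_)
  filter_upwards with x
  unfold gaussPdf; ring_nf

lemma hasDerivAt_neg_gaussPdf (t : ℝ) :
    HasDerivAt (fun t => -gaussPdf t) (t * gaussPdf t) t := by
  have h1 : HasDerivAt (fun t : ℝ => -(t ^ 2) / 2) (-t) t := by
    have := ((hasDerivAt_pow 2 t).neg).div_const 2
    simpa using this.congr_deriv (by ring)
  have h2 : HasDerivAt (fun t : ℝ => Real.exp (-(t ^ 2) / 2))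
      (Real.exp (-(t ^ 2) / 2) * (-t)) t := h1.exp
  have h3 := (h2.const_mul ((Real.sqrt (2 * Real.pi))⁻¹)).neg
  unfold gaussPdf
  refine h3.congr_deriv ?_
  ring

lemma gaussCdf_sub (a b : ℝ) : gaussCdf b - gaussCdf a = ∫ t in a..b, gaussPdf t := by
  unfold gaussCdf
  exact intervalIntegral.integral_Iic_sub_Iic integrable_gaussPdf.integrableOn integrable_gaussPdf.integrableOn

lemma monotone_gaussCdf : Monotone gaussCdf := by
  intro x y hxy
  have := gaussCdf_sub x y
  have h : 0 ≤ ∫ t in x..y, gaussPdf t :=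
    intervalIntegral.integral_nonneg hxy (fun t _ => (gaussPdf_pos t).le)
  linarith

lemma measurable_gaussCdf : Measurable gaussCdf := monotone_gaussCdf.measurable

lemma gaussCdf_sub_pos {a b : ℝ} (hab : a < b) : 0 < gaussCdf b - gaussCdf a := by
  rw [gaussCdf_sub]
  exact intervalIntegral.intervalIntegral_pos_of_pos_on
    (continuous_gaussPdf.intervalIntegrable a b) (fun t _ => gaussPdf_pos t) hab

lemma integral_mul_gaussPdf_interval (a b : ℝ) :
    ∫ t in a..b, t * gaussPdf t = gaussPdf a - gaussPdf b := by
  have := intervalIntegral.integral_eq_sub_of_hasDerivAt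
    (f := fun t => -gaussPdf t) (f' := fun t => t * gaussPdf t)
    (fun t _ => hasDerivAt_neg_gaussPdf t)
    ((continuous_id.mul continuous_gaussPdf).intervalIntegrable a b)
  rw [this]; ring

lemma abs_gaussPdf_sub_le {x c : ℝ} (hc : 0 < c) :
    |gaussPdf (x + c) - gaussPdf (x - c)| ≤ (|x| + c) * (gaussCdf (x + c) - gaussCdf (x - c)) := by
  have hab : x - c ≤ x + c := by linarith
  rw [gaussCdf_sub, ← integral_mul_gaussPdf_interval,
    intervalIntegral.integral_symm, abs_neg]
  have h1 : |∫ t in (x - c)..(x + c), t * gaussPdf t|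
      ≤ ∫ t in (x - c)..(x + c), (|x| + c) * gaussPdf t := by
    refine (intervalIntegral.abs_integral_le_integral_abs hab).trans ?_
    refine intervalIntegral.integral_mono_on hab
      ((continuous_id.mul continuous_gaussPdf).abs.intervalIntegrable _ _)
      ((continuous_const.mul continuous_gaussPdf).intervalIntegrable _ _) ?_
    intro t ht
    rw [Set.mem_Icc] at ht
    rw [abs_mul, abs_of_pos (gaussPdf_pos t)]
    have : |t| ≤ |x| + c := by
      rw [abs_le]; constructor
      · have := neg_abs_le x; linarith [ht.1]
      · have := le_abs_self x; linarith [ht.2]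
    exact mul_le_mul_of_nonneg_right this (gaussPdf_pos t).le
  calc |∫ t in (x - c)..(x + c), t * gaussPdf t|
      ≤ ∫ t in (x - c)..(x + c), (|x| + c) * gaussPdf t := h1
    _ = (|x| + c) * ∫ t in (x - c)..(x + c), gaussPdf t := by
        rw [intervalIntegral.integral_const_mul]

noncomputable def g3 (c : ℝ) (x : ℝ) : ℝ :=
  (gaussPdf (x + c) - gaussPdf (x - c)) ^ 2 / (gaussCdf (x + c) - gaussCdf (x - c))

lemma g3_nonneg {c : ℝ} (hc : 0 < c) (x : ℝ) : 0 ≤ g3 c x := by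
  have h := gaussCdf_sub_pos (show x - c < x + c by linarith)
  exact div_nonneg (sq_nonneg _) h.le

lemma g3_le {c : ℝ} (hc : 0 < c) (x : ℝ) :
    g3 c x ≤ (|x| + c) * (gaussPdf (x + c) + gaussPdf (x - c)) := by
  have hd := gaussCdf_sub_pos (show x - c < x + c by linarith)
  have key : (gaussPdf (x + c) - gaussPdf (x - c)) ^ 2
      ≤ ((|x| + c) * (gaussPdf (x + c) + gaussPdf (x - c))) * (gaussCdf (x + c) - gaussCdf (x - c)) := by
    have h1 := abs_gaussPdf_sub_le (x := x) hc
    have h2 : |gaussPdf (x + c) - gaussPdf (x - c)| ≤ gaussPdf (x + c) + gaussPdf (x - c) := by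
      have := (gaussPdf_pos (x + c)).le; have := (gaussPdf_pos (x - c)).le
      rw [abs_le]; constructor <;> linarith
    calc (gaussPdf (x + c) - gaussPdf (x - c)) ^ 2
        = |gaussPdf (x + c) - gaussPdf (x - c)| * |gaussPdf (x + c) - gaussPdf (x - c)| := by
          rw [abs_mul_abs_self, sq]
      _ ≤ (gaussPdf (x + c) + gaussPdf (x - c)) * ((|x| + c) * (gaussCdf (x + c) - gaussCdf (x - c))) := by
          exact mul_le_mul h2 h1 (abs_nonneg _)
            (add_nonneg (gaussPdf_pos _).le (gaussPdf_pos _).le)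
      _ = ((|x| + c) * (gaussPdf (x + c) + gaussPdf (x - c))) * (gaussCdf (x + c) - gaussCdf (x - c)) := by ring
  rw [g3, div_le_iff₀ hd]
  exact key

lemma measurable_g3 (c : ℝ) : Measurable (g3 c) := by
  apply Measurable.div
  · exact ((continuous_gaussPdf.comp (continuous_id.add continuous_const)).sub
      (continuous_gaussPdf.comp (continuous_id.sub continuous_const))).measurable.pow_const 2
  · exact (measurable_gaussCdf.comp (measurable_id.add_const c)).sub
      (measurable_gaussCdf.comp (measurable_id.sub measurable_const))

lemma integrable_bound {c : ℝ} (hc : 0 < c) :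
    Integrable (fun x => (|x| + c) * (gaussPdf (x + c) + gaussPdf (x - c))) := by
  have habs : Integrable (fun u : ℝ => |u| * gaussPdf u) :=
    (integrable_mul_gaussPdf.abs.congr (by
      filter_upwards with u
      rw [abs_mul, abs_of_pos (gaussPdf_pos u)]))
  have h : Integrable (fun u : ℝ => (|u| + 2 * |c|) * gaussPdf u) := by
    exact (habs.add (integrable_gaussPdf.const_mul (2 * |c|))).congr
      (Filter.Eventually.of_forall fun u => by simp only [Pi.add_apply]; ring)
  have h1 : Integrable (fun x : ℝ => (|x + c| + 2 * |c|) * gaussPdf (x + c)) :=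
    h.comp_add_right c
  have h2 : Integrable (fun x : ℝ => (|x - c| + 2 * |c|) * gaussPdf (x - c)) :=
    h.comp_sub_right c
  refine ((h1.add h2).mono' ?_ ?_)
  · exact (((continuous_abs.add continuous_const).mul
      ((continuous_gaussPdf.comp (continuous_id.add continuous_const)).add
        (continuous_gaussPdf.comp (continuous_id.sub continuous_const)))).aestronglyMeasurable)
  · filter_upwards with x
    have p1 := (gaussPdf_pos (x + c)).le
    have p2 := (gaussPdf_pos (x - c)).le
    have b1 : |x| + c ≤ |x + c| + 2 * |c| := by
      have := abs_sub_abs_le_abs_sub x (-c)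
      have := le_abs_self c
      simp only [sub_neg_eq_add] at *
      have hxc : |x| - |x + c| ≤ |c| := by
        have h := abs_sub_abs_le_abs_sub x (x + c)
        simpa [abs_sub_comm] using h
      linarith
    have b2 : |x| + c ≤ |x - c| + 2 * |c| := by
      have hxc : |x| - |x - c| ≤ |c| := by
        have h := abs_sub_abs_le_abs_sub x (x - c)
        simpa using h
      have := le_abs_self c
      linarith
    rw [Real.norm_eq_abs, abs_of_nonneg (mul_nonneg
      (add_nonneg (abs_nonneg x) hc.le) (add_nonneg p1 p2))]
    simp only [Pi.add_apply]
    have m1 := mul_le_mul_of_nonneg_right b1 p1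
    have m2 := mul_le_mul_of_nonneg_right b2 p2
    nlinarith

lemma integrable_g3 {c : ℝ} (hc : 0 < c) : Integrable (g3 c) := by
  refine (integrable_bound hc).mono' (measurable_g3 c).aestronglyMeasurable ?_
  filter_upwards with x
  rw [Real.norm_eq_abs, abs_of_nonneg (g3_nonneg hc x)]
  exact g3_le hc x

open ENNReal in
lemma lintegral_cdf_diff {c : ℝ} (hc : 0 < c) :
    ∫⁻ x, ENNReal.ofReal (gaussCdf (x + c) - gaussCdf (x - c)) = ENNReal.ofReal (2 * c) := by
  have hmeas : Measurable fun p : ℝ × ℝ =>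
      (Set.Ioc (p.1 - c) (p.1 + c)).indicator (fun t => ENNReal.ofReal (gaussPdf t)) p.2 := by
    have hs : MeasurableSet {p : ℝ × ℝ | p.1 - c < p.2 ∧ p.2 ≤ p.1 + c} := by
      apply MeasurableSet.inter
      · exact measurableSet_lt (measurable_fst.sub measurable_const) measurable_snd
      · exact measurableSet_le measurable_snd (measurable_fst.add measurable_const)
    have : (fun p : ℝ × ℝ =>
        (Set.Ioc (p.1 - c) (p.1 + c)).indicator (fun t => ENNReal.ofReal (gaussPdf t)) p.2)
        = fun p : ℝ × ℝ => {p : ℝ × ℝ | p.1 - c < p.2 ∧ p.2 ≤ p.1 + c}.indicator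
            (fun q => ENNReal.ofReal (gaussPdf q.2)) p := by
      funext p
      simp only [Set.indicator_apply, Set.mem_Ioc, Set.mem_setOf_eq]
    rw [this]
    exact ((continuous_gaussPdf.measurable.comp measurable_snd).ennreal_ofReal).indicator hs
  have step1 : ∀ x : ℝ, ENNReal.ofReal (gaussCdf (x + c) - gaussCdf (x - c))
      = ∫⁻ t, (Set.Ioc (x - c) (x + c)).indicator (fun t => ENNReal.ofReal (gaussPdf t)) t := by
    intro x
    rw [gaussCdf_sub, intervalIntegral.integral_of_le (by linarith : x - c ≤ x + c)]
    rw [ofReal_integral_eq_lintegral_ofReal integrable_gaussPdf.integrableOn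
      (Filter.Eventually.of_forall fun t => (gaussPdf_pos t).le)]
    rw [lintegral_indicator measurableSet_Ioc]
  calc ∫⁻ x, ENNReal.ofReal (gaussCdf (x + c) - gaussCdf (x - c))
      = ∫⁻ x, ∫⁻ t, (Set.Ioc (x - c) (x + c)).indicator
          (fun t => ENNReal.ofReal (gaussPdf t)) t := by
        simp_rw [step1]
    _ = ∫⁻ t, ∫⁻ x, (Set.Ioc (x - c) (x + c)).indicator
          (fun t => ENNReal.ofReal (gaussPdf t)) t := by
        exact lintegral_lintegral_swap hmeas.aemeasurable
    _ = ∫⁻ t, ∫⁻ x, (Set.Ico (t - c) (t + c)).indicator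
          (fun _ => ENNReal.ofReal (gaussPdf t)) x := by
        congr 1; funext t; congr 1; funext x
        simp only [Set.indicator_apply, Set.mem_Ioc, Set.mem_Ico]
        congr 1
        simp only [eq_iff_iff]
        constructor
        · rintro ⟨h1, h2⟩; exact ⟨by linarith, by linarith⟩
        · rintro ⟨h1, h2⟩; exact ⟨by linarith, by linarith⟩
    _ = ∫⁻ t, ENNReal.ofReal (gaussPdf t) * ENNReal.ofReal (2 * c) := by
        congr 1; funext t
        rw [lintegral_indicator measurableSet_Ico, setLIntegral_const,
          Real.volume_Ico]
        congr 1
        ring_nf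
    _ = (∫⁻ t, ENNReal.ofReal (gaussPdf t)) * ENNReal.ofReal (2 * c) := by
        exact lintegral_mul_const _ (continuous_gaussPdf.measurable.ennreal_ofReal)
    _ = ENNReal.ofReal (2 * c) := by
        rw [← ofReal_integral_eq_lintegral_ofReal integrable_gaussPdf
          (Filter.Eventually.of_forall fun t => (gaussPdf_pos t).le)]
        rw [integral_gaussPdf]
        simp

lemma cdf_diff_nonneg {c : ℝ} (hc : 0 < c) (x : ℝ) :
    0 ≤ gaussCdf (x + c) - gaussCdf (x - c) :=
  sub_nonneg.mpr (monotone_gaussCdf (by linarith))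

lemma measurable_cdf_diff (c : ℝ) :
    Measurable fun x => gaussCdf (x + c) - gaussCdf (x - c) :=
  (measurable_gaussCdf.comp (measurable_id.add_const c)).sub
    (measurable_gaussCdf.comp (measurable_id.sub measurable_const))

lemma integrable_cdf_diff {c : ℝ} (hc : 0 < c) :
    Integrable (fun x => gaussCdf (x + c) - gaussCdf (x - c)) := by
  refine ⟨(measurable_cdf_diff c).aestronglyMeasurable, ?_⟩
  rw [hasFiniteIntegral_iff_ofReal (Filter.Eventually.of_forall (cdf_diff_nonneg hc))]
  rw [lintegral_cdf_diff hc]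
  exact ENNReal.ofReal_lt_top

lemma integral_cdf_diff {c : ℝ} (hc : 0 < c) :
    ∫ x, (gaussCdf (x + c) - gaussCdf (x - c)) = 2 * c := by
  rw [integral_eq_lintegral_of_nonneg_ae (Filter.Eventually.of_forall (cdf_diff_nonneg hc))
    (measurable_cdf_diff c).aestronglyMeasurable, lintegral_cdf_diff hc,
    ENNReal.toReal_ofReal (by linarith)]

lemma integrable_pdf_term (c : ℝ) :
    Integrable (fun x => (x + c) * gaussPdf (x + c) - (x - c) * gaussPdf (x - c)) :=
  (integrable_mul_gaussPdf.comp_add_right c).sub (integrable_mul_gaussPdf.comp_sub_right c)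

lemma integral_pdf_term (c : ℝ) :
    ∫ x, ((x + c) * gaussPdf (x + c) - (x - c) * gaussPdf (x - c)) = 0 := by
  rw [integral_sub (integrable_mul_gaussPdf.comp_add_right c)
    (integrable_mul_gaussPdf.comp_sub_right c)]
  rw [integral_add_right_eq_self (fun u => u * gaussPdf u) c,
    integral_sub_right_eq_self (fun u => u * gaussPdf u) c, sub_self]

/-- The expected variance of a truncated normal posterior with location `ȳ`,
scale `σ²/n` and domain `[−R, R]`, where `ȳ` has density `(1/(2R))(Φ(b(ȳ)) − Φ(a(ȳ)))`,
equals `(σ²/n)(1 − (σ/(2√n R)) ∫_ℝ (φ(x+c) − φ(x−c))²/(Φ(x+c) − Φ(x−c)) dx)`,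
where `c = √n R/σ`. -/
theorem expected_truncated_posterior_variance_eq
    (σ R : ℝ) (hσ : 0 < σ) (hR : 0 < R) (n : ℕ) (hn : 1 ≤ n)
    (a b : ℝ → ℝ) (c : ℝ)
    (ha : ∀ ybar, a ybar = -(Real.sqrt n * (R + ybar) / σ))
    (hb : ∀ ybar, b ybar = Real.sqrt n * (R - ybar) / σ)
    (hc : c = Real.sqrt n * R / σ) :
    ∫ ybar : ℝ,
        (1 / (2 * R)) * (σ ^ 2 / n) *
          ((gaussCdf (b ybar) - gaussCdf (a ybar))
            - (b ybar * gaussPdf (b ybar) - a ybar * gaussPdf (a ybar))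
            - (gaussPdf (b ybar) - gaussPdf (a ybar)) ^ 2 /
                (gaussCdf (b ybar) - gaussCdf (a ybar)))
      = (σ ^ 2 / n) *
          (1 - σ / (2 * Real.sqrt n * R) *
            ∫ x : ℝ, (gaussPdf (x + c) - gaussPdf (x - c)) ^ 2 /
              (gaussCdf (x + c) - gaussCdf (x - c))) := by
  have hn0 : (0:ℝ) < n := by exact_mod_cast Nat.lt_of_lt_of_le Nat.zero_lt_one hn
  have hsn : 0 < Real.sqrt n := Real.sqrt_pos.mpr hn0
  have hcpos : 0 < c := by rw [hc]; positivity
  set K : ℝ := (1 / (2 * R)) * (σ ^ 2 / n) with hK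
  set k : ℝ := -(Real.sqrt n / σ) with hkdef
  have hk : k ≠ 0 := by
    rw [hkdef]
    exact neg_ne_zero.mpr (div_ne_zero hsn.ne' hσ.ne')
  set G : ℝ → ℝ := fun x => K *
    ((gaussCdf (x + c) - gaussCdf (x - c))
      - ((x + c) * gaussPdf (x + c) - (x - c) * gaussPdf (x - c))
      - g3 c x) with hG
  have hab : ∀ ybar : ℝ, a ybar = k * ybar - c ∧ b ybar = k * ybar + c := by
    intro ybar
    rw [ha, hb, hkdef, hc]
    constructor <;> (field_simp; ring)
  have hcomp : ∀ ybar : ℝ,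
      (1 / (2 * R)) * (σ ^ 2 / n) *
          ((gaussCdf (b ybar) - gaussCdf (a ybar))
            - (b ybar * gaussPdf (b ybar) - a ybar * gaussPdf (a ybar))
            - (gaussPdf (b ybar) - gaussPdf (a ybar)) ^ 2 /
                (gaussCdf (b ybar) - gaussCdf (a ybar)))
        = G (k * ybar) := by
    intro ybar
    rw [(hab ybar).1, (hab ybar).2]
    simp only [hG, g3, hK]
  have hIG : ∫ x, G x = K * (2 * c - 0 - ∫ x, g3 c x) := by
    have I12 : Integrable (fun x => (gaussCdf (x + c) - gaussCdf (x - c))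
        - ((x + c) * gaussPdf (x + c) - (x - c) * gaussPdf (x - c))) :=
      (integrable_cdf_diff hcpos).sub (integrable_pdf_term c)
    rw [hG]
    rw [integral_const_mul]
    rw [integral_sub I12 (integrable_g3 hcpos),
      integral_sub (integrable_cdf_diff hcpos) (integrable_pdf_term c),
      integral_cdf_diff hcpos, integral_pdf_term]
  calc ∫ ybar : ℝ, (1 / (2 * R)) * (σ ^ 2 / n) *
          ((gaussCdf (b ybar) - gaussCdf (a ybar))
            - (b ybar * gaussPdf (b ybar) - a ybar * gaussPdf (a ybar))
            - (gaussPdf (b ybar) - gaussPdf (a ybar)) ^ 2 /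
                (gaussCdf (b ybar) - gaussCdf (a ybar)))
      = ∫ ybar : ℝ, G (k * ybar) := by
        exact integral_congr_ae (Filter.Eventually.of_forall hcomp)
    _ = |k⁻¹| • ∫ x, G x := MeasureTheory.Measure.integral_comp_mul_left G k
    _ = (σ / Real.sqrt n) * (K * (2 * c - 0 - ∫ x, g3 c x)) := by
        rw [hIG, hkdef]
        rw [smul_eq_mul]
        congr 1
        rw [inv_neg, abs_neg, abs_inv,
          abs_of_nonneg (by positivity : (0:ℝ) ≤ Real.sqrt ↑n / σ), inv_div]
    _ = (σ ^ 2 / n) * (1 - σ / (2 * Real.sqrt n * R) * ∫ x, g3 c x) := by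
        have hs2 : Real.sqrt ↑n * Real.sqrt ↑n = (n:ℝ) := Real.mul_self_sqrt hn0.le
        rw [hK, hc]
        field_simp
        ring_nf
    _ = _ := by simp only [g3]
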